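/- Let p be a prime and let f_1, …, f_g be cusp forms of weight 2 on Γ0(p). Let W : ℍ → ℂ be the Wronskian W(τ) := det((d/dτ)^{j−1} f_i(τ))_{1≤i,j≤g}. Then W satisfies the weight g(g+1) transformation law on Γ0(p): for every γ ∈ Γ0(p), W ∣[g(g+1)] γ = W. -/

import Mathlib

open UpperHalfPlane ModularForm Matrix CongruenceSubgroup Filter
open scoped MatrixGroups ModularForm Manifold

private lemma anly_iteratedDeriv {F : ℂ → ℂ} {U : Set ℂ} (hU : IsOpen U)
    (hF : AnalyticOnNhd ℂ F U) (m : ℕ) : AnalyticOnNhd ℂ (iteratedDeriv m F) U := by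
  induction m with
  | zero => simpa using hF
  | succ n ih => rw [iteratedDeriv_succ]; exact ih.deriv_of_isOpen hU

private lemma exists_coeffs (u φ : ℂ → ℂ) (U : Set ℂ) (hU : IsOpen U)
    (hu : AnalyticOnNhd ℂ u U) (hφ : AnalyticOnNhd ℂ φ U) (hmaps : Set.MapsTo φ U U) :
    ∀ j : ℕ, ∃ c : ℕ → ℂ → ℂ,
      (∀ m, AnalyticOnNhd ℂ (c m) U) ∧
      (∀ m, j < m → c m = fun _ => 0) ∧
      (∀ τ, c j τ = u τ * (deriv φ τ) ^ j) ∧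
      (∀ F : ℂ → ℂ, AnalyticOnNhd ℂ F U → ∀ τ ∈ U,
        iteratedDeriv j (fun z => u z * F (φ z)) τ =
          ∑ m ∈ Finset.range (j + 1), c m τ * iteratedDeriv m F (φ τ)) := by
  intro j
  induction j with
  | zero =>
    refine ⟨fun m => if m = 0 then u else fun _ => 0, ?_, ?_, ?_, ?_⟩
    · intro m; by_cases h : m = 0 <;> simp [h, hu] <;> exact analyticOnNhd_const
    · intro m hm; simp only []; rw [if_neg (by omega : ¬ m = 0)]
    · intro τ; simp
    · intro F hF τ hτ; simp
  | succ j ih =>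
    obtain ⟨c, hca, hcz, hcd, hcs⟩ := ih
    refine ⟨fun m => deriv (c m) + (if m = 0 then (fun _ => 0) else c (m - 1)) * deriv φ,
      ?_, ?_, ?_, ?_⟩
    · intro m
      refine ((hca m).deriv_of_isOpen hU).add (AnalyticOnNhd.mul ?_ (hφ.deriv_of_isOpen hU))
      by_cases h : m = 0
      · simp only [h, if_pos]; exact analyticOnNhd_const
      · simp only [h, if_neg, ite_false]; exact hca _
    · intro m hm
      have h1 : c m = fun _ => 0 := hcz m (by omega)
      have h2 : c (m - 1) = fun _ => 0 := hcz (m - 1) (by omega)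
      funext τ
      simp [h1, h2, (by omega : m ≠ 0), deriv_const']
    · intro τ
      have h1 : c (j + 1) = fun _ => 0 := hcz (j + 1) (by omega)
      simp only [h1, deriv_const', Pi.add_apply, Pi.mul_apply]
      simp [hcd, pow_succ, mul_assoc]
    · intro F hF τ hτ
      rw [iteratedDeriv_succ]
      have hev : iteratedDeriv j (fun z => u z * F (φ z)) =ᶠ[nhds τ]
          fun σ => ∑ m ∈ Finset.range (j + 1), c m σ * iteratedDeriv m F (φ σ) := by
        filter_upwards [hU.mem_nhds hτ] with σ hσ using hcs F hF σ hσ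
      rw [hev.deriv_eq]
      have hdm : ∀ m ∈ Finset.range (j + 1), DifferentiableAt ℂ
          (fun σ => c m σ * iteratedDeriv m F (φ σ)) τ := by
        intro m _
        exact ((hca m τ hτ).differentiableAt).mul
          (((anly_iteratedDeriv hU hF m (φ τ) (hmaps hτ)).differentiableAt).comp τ
            (hφ τ hτ).differentiableAt)
      rw [deriv_fun_sum hdm]
      have hterm : ∀ m ∈ Finset.range (j + 1),
          deriv (fun σ => c m σ * iteratedDeriv m F (φ σ)) τ =
          deriv (c m) τ * iteratedDeriv m F (φ τ) +
          c m τ * (iteratedDeriv (m + 1) F (φ τ) * deriv φ τ) := by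
        intro m _
        have h1 : HasDerivAt (c m) (deriv (c m) τ) τ :=
          ((hca m τ hτ).differentiableAt).hasDerivAt
        have h2 : HasDerivAt (fun σ => iteratedDeriv m F (φ σ))
            (iteratedDeriv (m + 1) F (φ τ) * deriv φ τ) τ := by
          have := (((anly_iteratedDeriv hU hF m (φ τ) (hmaps hτ)).differentiableAt).hasDerivAt).comp
            τ (((hφ τ hτ).differentiableAt).hasDerivAt)
          rw [iteratedDeriv_succ]
          exact this
        rw [(h1.fun_mul h2).deriv]
      rw [Finset.sum_congr rfl hterm, Finset.sum_add_distrib]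
      have hR : ∑ m ∈ Finset.range (j + 2),
          (deriv (c m) + (if m = 0 then (fun _ => 0) else c (m - 1)) * deriv φ) τ *
            iteratedDeriv m F (φ τ) =
          (∑ m ∈ Finset.range (j + 2), deriv (c m) τ * iteratedDeriv m F (φ τ)) +
          ∑ m ∈ Finset.range (j + 2),
            (if m = 0 then (0:ℂ) else c (m-1) τ) * deriv φ τ * iteratedDeriv m F (φ τ) := by
        rw [← Finset.sum_add_distrib]
        refine Finset.sum_congr rfl fun m _ => ?_
        by_cases h : m = 0 <;> simp [h] <;> ring
      rw [hR]
      congr 1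
      · -- first sums
        rw [Finset.sum_range_succ (fun m => deriv (c m) τ * iteratedDeriv m F (φ τ)) (j+1)]
        have : c (j + 1) = fun _ => 0 := hcz (j + 1) (by omega)
        simp [this, deriv_const']
      · -- second sums
        rw [Finset.sum_range_succ' (fun m =>
          (if m = 0 then (0:ℂ) else c (m-1) τ) * deriv φ τ * iteratedDeriv m F (φ τ)) (j+1)]
        simp only [Nat.succ_ne_zero, ite_false, Nat.add_sub_cancel, if_pos, zero_mul, add_zero]
        exact Finset.sum_congr rfl fun m _ => by ring

/-- The Wronskian of a family of functions on the upper half-plane, with complex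
derivatives taken via the local inverse `ofComplex` of the inclusion `ℍ ↪ ℂ`. -/
noncomputable def wronskianH {g : ℕ} (f : Fin g → (ℍ → ℂ)) : ℍ → ℂ :=
  fun τ => Matrix.det (Matrix.of fun i j : Fin g =>
    iteratedDeriv (j : ℕ) ((f i) ∘ UpperHalfPlane.ofComplex) (τ : ℂ))

private lemma sum_fin_eq_sum_range {g : ℕ} (j : Fin g) (h : ℕ → ℂ)
    (hzero : ∀ m, (j : ℕ) < m → h m = 0) :
    ∑ m : Fin g, h m = ∑ m ∈ Finset.range ((j : ℕ) + 1), h m := by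
  rw [Fin.sum_univ_eq_sum_range]
  symm
  apply Finset.sum_subset
  · intro x hx
    simp only [Finset.mem_range] at *
    have := j.2
    omega
  · intro x hx hnx
    simp only [Finset.mem_range] at hx hnx
    exact hzero x (by omega)

private lemma nat_arith (g : ℕ) (S : ℕ) (hS : S * 2 = g * (g - 1)) :
    2 * S + 2 * g = g * (g + 1) := by
  cases g with
  | zero => omega
  | succ n =>
    have : n + 1 - 1 = n := rfl
    rw [this] at hS
    nlinarith [hS]

theorem wronskian_slash_invariant_Gamma0
    (p : ℕ) (hp : p.Prime) (g : ℕ)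
    (f : Fin g → CuspForm (Gamma0 p) 2) :
    ∀ γ ∈ Gamma0 p,
      wronskianH (fun i => (f i : ℍ → ℂ)) ∣[(g * (g + 1) : ℤ)] γ =
        wronskianH (fun i => (f i : ℍ → ℂ)) := by
  intro γ hγ
  set F : Fin g → ℂ → ℂ := fun i => (⇑(f i)) ∘ UpperHalfPlane.ofComplex with hFdef
  set U : Set ℂ := {z | 0 < z.im} with hUdef
  have hUopen : IsOpen U := isOpen_lt continuous_const Complex.continuous_im
  set a : ℂ := ((γ 0 0 : ℤ) : ℂ) with hadef
  set b : ℂ := ((γ 0 1 : ℤ) : ℂ) with hbdef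
  set c : ℂ := ((γ 1 0 : ℤ) : ℂ) with hcdef
  set d : ℂ := ((γ 1 1 : ℤ) : ℂ) with hddef
  set σ : ℂ → ℂ := fun z => (a * z + b) / (c * z + d) with hσdef
  set u : ℂ → ℂ := fun z => (c * z + d) ^ 2 with hudef
  have hdet : a * d - b * c = 1 := by
    have h : γ 0 0 * γ 1 1 - γ 0 1 * γ 1 0 = 1 := by
      have h2 := γ.2
      rwa [Matrix.det_fin_two] at h2
    rw [hadef, hbdef, hcdef, hddef]
    exact_mod_cast congrArg (fun n : ℤ => (n : ℂ)) h
  have hdenom : ∀ τ : ℍ, denom γ τ = c * ↑τ + d := by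
    intro τ
    rw [ModularGroup.denom_apply]
  have hne : ∀ z ∈ U, c * z + d ≠ 0 := by
    intro z hz
    have h : denom γ (⟨z, hz⟩ : ℍ) ≠ 0 := denom_ne_zero _ _
    rwa [hdenom ⟨z, hz⟩] at h
  have hsmul : ∀ τ : ℍ, ((γ • τ : ℍ) : ℂ) = σ ↑τ := by
    intro τ
    rw [specialLinearGroup_apply]
    simp [hσdef, hadef, hbdef, hcdef, hddef]
  have hmapsσ : Set.MapsTo σ U U := by
    intro z hz
    set τ : ℍ := ⟨z, hz⟩ with hτdef
    have h : ((γ • τ : ℍ) : ℂ) = σ z := hsmul τ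
    rw [← h]
    exact (γ • τ).2
  have hlinc : AnalyticOnNhd ℂ (fun z : ℂ => c * z + d) U :=
    (analyticOnNhd_const.mul analyticOnNhd_id).add analyticOnNhd_const
  have hlina : AnalyticOnNhd ℂ (fun z : ℂ => a * z + b) U :=
    (analyticOnNhd_const.mul analyticOnNhd_id).add analyticOnNhd_const
  have hua : AnalyticOnNhd ℂ u U := hlinc.pow 2
  have hσa : AnalyticOnNhd ℂ σ U := hlina.div hlinc hne
  have hFanly : ∀ i, AnalyticOnNhd ℂ (F i) U := fun i =>
    (UpperHalfPlane.mdifferentiable_iff.mp (f i).holo').analyticOnNhd hUopen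
  have hmod : ∀ i, ∀ z ∈ U, F i (σ z) = u z * F i z := by
    intro i z hz
    set τ : ℍ := ⟨z, hz⟩ with hτdef
    have h1 := SlashInvariantForm.slash_action_eqn_SL'' (f i) hγ τ
    have h2 : ((γ • τ : ℍ) : ℂ) = σ z := hsmul τ
    have h3 : F i (σ z) = f i (γ • τ) := by
      rw [hFdef]
      simp only [Function.comp_apply, ← h2, ofComplex_apply]
    have h4 : F i z = f i τ := by
      rw [hFdef]
      simp only [Function.comp_apply]
      congr 1
      exact ofComplex_apply τ
    rw [h3, h4, h1, hdenom τ]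
    norm_num [hudef]
    exact Or.inl rfl
  have hderivσ : ∀ z ∈ U, deriv σ z = ((c * z + d) ^ 2)⁻¹ := by
    intro z hz
    have h1 : HasDerivAt (fun w : ℂ => a * w + b) a z := by
      simpa using ((hasDerivAt_id z).const_mul a).add_const b
    have h2 : HasDerivAt (fun w : ℂ => c * w + d) c z := by
      simpa using ((hasDerivAt_id z).const_mul c).add_const d
    have h3 := (h1.div h2 (hne z hz)).deriv
    rw [show σ = ((fun w : ℂ => a * w + b) / fun w => c * w + d) from rfl]
    rw [h3, show a * (c * z + d) - (a * z + b) * c = 1 by linear_combination hdet, one_div]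
  -- pointwise Wronskian transformation
  have hW : ∀ τ : ℍ, wronskianH (fun i => (f i : ℍ → ℂ)) (γ • τ) =
      denom γ τ ^ (g * (g + 1)) * wronskianH (fun i => (f i : ℍ → ℂ)) τ := by
    intro τ
    set z : ℂ := (τ : ℂ) with hzdef
    have hz : z ∈ U := τ.2
    choose CC hCa hCz hCd hCs using
      exists_coeffs (fun _ => (1 : ℂ)) σ U hUopen analyticOnNhd_const hσa hmapsσ
    choose BB hBa hBz hBd hBs using
      exists_coeffs u (fun w => w) U hUopen hua analyticOnNhd_id (Set.mapsTo_id U)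
    set Mc : Matrix (Fin g) (Fin g) ℂ := Matrix.of fun j m : Fin g => CC (j : ℕ) (m : ℕ) z
      with hMcdef
    set Mb : Matrix (Fin g) (Fin g) ℂ := Matrix.of fun j m : Fin g => BB (j : ℕ) (m : ℕ) z
      with hMbdef
    set MM : Matrix (Fin g) (Fin g) ℂ :=
      Matrix.of fun m i : Fin g => iteratedDeriv (m : ℕ) (F i) z with hMMdef
    set MM' : Matrix (Fin g) (Fin g) ℂ :=
      Matrix.of fun m i : Fin g => iteratedDeriv (m : ℕ) (F i) (σ z) with hMM'def
    have key : Mc * MM' = Mb * MM := by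
      ext j i
      rw [Matrix.mul_apply, Matrix.mul_apply]
      have hL : ∑ m : Fin g, Mc j m * MM' m i =
          iteratedDeriv (j : ℕ) (fun w => (1 : ℂ) * F i (σ w)) z := by
        have hh := sum_fin_eq_sum_range j
          (fun n => CC (j : ℕ) n z * iteratedDeriv n (F i) (σ z)) (fun m hm => by
            have h0 := hCz (j : ℕ) m hm; simp [h0])
        exact hh.trans (hCs (j : ℕ) (F i) (hFanly i) z hz).symm
      have hR : ∑ m : Fin g, Mb j m * MM m i =
          iteratedDeriv (j : ℕ) (fun w => u w * F i w) z := by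
        have hh := sum_fin_eq_sum_range j
          (fun n => BB (j : ℕ) n z * iteratedDeriv n (F i) z) (fun m hm => by
            have h0 := hBz (j : ℕ) m hm; simp [h0])
        exact hh.trans (hBs (j : ℕ) (F i) (hFanly i) z hz).symm
      rw [hL, hR]
      apply Filter.EventuallyEq.iteratedDeriv_eq
      filter_upwards [hUopen.mem_nhds hz] with w hw
      rw [one_mul, hmod i w hw]
    have hdets : Mc.det * MM'.det = Mb.det * MM.det := by
      have := congrArg Matrix.det key
      rwa [Matrix.det_mul, Matrix.det_mul] at this
    have hMcdet : Mc.det = ∏ m : Fin g, (deriv σ z) ^ (m : ℕ) := by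
      rw [Matrix.det_of_lowerTriangular Mc (by
        intro i j hij
        have hlt : (i : ℕ) < (j : ℕ) := hij
        simp only [hMcdef, Matrix.of_apply, hCz (i : ℕ) (j : ℕ) hlt])]
      exact Finset.prod_congr rfl fun m _ => by
        simp only [hMcdef, Matrix.of_apply, hCd (m : ℕ), one_mul]
    have hMbdet : Mb.det = (u z) ^ g := by
      rw [Matrix.det_of_lowerTriangular Mb (by
        intro i j hij
        have hlt : (i : ℕ) < (j : ℕ) := hij
        simp only [hMbdef, Matrix.of_apply, hBz (i : ℕ) (j : ℕ) hlt])]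
      have : ∀ m : Fin g, Mb m m = u z := by
        intro m
        simp only [hMbdef, Matrix.of_apply, hBd (m : ℕ)]
        rw [deriv_id'']
        simp
      rw [Finset.prod_congr rfl fun m _ => this m, Finset.prod_const, Finset.card_univ,
        Fintype.card_fin]
    set D : ℂ := c * z + d with hDdef
    have hD : D ≠ 0 := hne z hz
    set S : ℕ := ∑ m ∈ Finset.range g, m with hSdef
    have hMcdet2 : Mc.det = ((D ^ 2)⁻¹) ^ S := by
      rw [hMcdet]
      rw [Fin.prod_univ_eq_prod_range (fun m => (deriv σ z) ^ m) g,
        Finset.prod_pow_eq_pow_sum, hderivσ z hz, hSdef]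
    have hMM'det : MM'.det = D ^ (g * (g + 1)) * MM.det := by
      have h1 : ((D ^ 2)⁻¹) ^ S * MM'.det = (D ^ 2) ^ g * MM.det := by
        rw [← hMcdet2, ← hMbdet, hdets, hMbdet]
      have h2 : (D ^ 2) ^ S ≠ 0 := pow_ne_zero _ (pow_ne_zero _ hD)
      have h3 : MM'.det = (D ^ 2) ^ S * ((D ^ 2) ^ g * MM.det) := by
        rw [← h1, inv_pow]
        field_simp
      have h4 : (D ^ 2) ^ S * (D ^ 2) ^ g = D ^ (g * (g + 1)) := by
        rw [← pow_mul, ← pow_mul, ← pow_add]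
        congr 1
        exact nat_arith g S (Finset.sum_range_id_mul_two g)
      rw [h3, ← mul_assoc, h4]
    -- now translate to wronskianH
    have hWτ : wronskianH (fun i => (f i : ℍ → ℂ)) τ = MM.det := by
      rw [wronskianH, ← Matrix.det_transpose]
      congr 1
    have hWγτ : wronskianH (fun i => (f i : ℍ → ℂ)) (γ • τ) = MM'.det := by
      rw [wronskianH]
      have hc : ((γ • τ : ℍ) : ℂ) = σ z := hsmul τ
      rw [show (Matrix.of fun i j : Fin g =>
          iteratedDeriv (j : ℕ) (((fun i => (f i : ℍ → ℂ)) i) ∘ UpperHalfPlane.ofComplex)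
            ((γ • τ : ℍ) : ℂ)) = MM'ᵀ by
        ext i j
        simp only [Matrix.of_apply, Matrix.transpose_apply, hMM'def, hc, hFdef], Matrix.det_transpose]
    rw [hWτ, hWγτ, hMM'det, hdenom τ]
  -- final assembly
  funext τ
  have hk : ((g : ℤ) * ((g : ℤ) + 1)) = ((g * (g + 1) : ℕ) : ℤ) := by push_cast; ring
  rw [SL_slash_apply]
  rw [hW τ]
  have hD : denom γ τ ≠ 0 := denom_ne_zero _ τ
  rw [hk, _root_.zpow_neg, _root_.zpow_natCast]
  field_simp
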